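/- Let p be a real number of the form p = 2i/(2j+1) with i, j positive integers and p > 2. Let x ∈ L^p(0, ∞) be real-valued and set y(s) = (1/s)·∫_0^s x for s > 0. Then ∫_0^∞ |y(s) - x(s)|^p ds ≤ (1/m_p) · ∫_0^∞ |x(s)|^p ds. -/

import Mathlib

open MeasureTheory

/-- `m_p`: the minimum value of `f_p(t) = p t^(p-1) + (1-t)^p - t^p` on `[0, 1/2]`. -/
noncomputable def mVal (p : ℝ) : ℝ :=
  sInf ((fun t : ℝ => p * t ^ (p - 1) + (1 - t) ^ p - t ^ p) '' Set.Icc 0 (1 / 2))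

section Aux

open MeasureTheory Set Filter Topology
open scoped ENNReal NNReal


namespace Stmt13

noncomputable def fp (p t : ℝ) : ℝ := p * t ^ (p - 1) + (1 - t) ^ p - t ^ p

noncomputable def mVal' (p : ℝ) : ℝ := sInf (fp p '' Set.Icc 0 (1 / 2))

variable {p : ℝ}

lemma fp_nonneg (hp2 : 2 < p) {t : ℝ} (ht : t ∈ Icc (0:ℝ) (1/2)) : 0 ≤ fp p t := by
  obtain ⟨h0, h1⟩ := ht
  have h2 : t ^ p ≤ (1 - t) ^ p := Real.rpow_le_rpow h0 (by linarith) (by linarith)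
  have h3 : 0 ≤ p * t ^ (p - 1) := by positivity
  unfold fp; linarith

lemma fp_pos (hp2 : 2 < p) {t : ℝ} (ht : t ∈ Icc (0:ℝ) (1/2)) : 0 < fp p t := by
  obtain ⟨h0, h1⟩ := ht
  rcases eq_or_lt_of_le h0 with rfl | h0'
  · simp [fp, Real.zero_rpow (by linarith : p - 1 ≠ 0), Real.zero_rpow (by linarith : p ≠ 0)]
  · have h2 : t ^ p ≤ (1 - t) ^ p := Real.rpow_le_rpow h0 (by linarith) (by linarith)
    have h3 : 0 < p * t ^ (p - 1) := by positivity
    unfold fp; linarith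

lemma continuous_rpow_const (hq : 0 < p) : Continuous fun t : ℝ => t ^ p :=
  continuous_iff_continuousAt.2 fun x => Real.continuousAt_rpow_const x p (Or.inr hq.le)

lemma continuous_fp (hp2 : 2 < p) : Continuous (fp p) := by
  have h1 : Continuous fun t : ℝ => t ^ (p - 1) := continuous_rpow_const (by linarith)
  have h2 : Continuous fun t : ℝ => t ^ p := continuous_rpow_const (by linarith)
  have h3 : Continuous fun t : ℝ => (1 - t) ^ p := h2.comp (by continuity)
  exact ((continuous_const.mul h1).add h3).sub h2

lemma bddBelow_fp (hp2 : 2 < p) : BddBelow (fp p '' Icc 0 (1/2)) :=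
  ⟨0, fun v ⟨t, ht, htv⟩ => htv ▸ fp_nonneg hp2 ht⟩

lemma mVal'_le (hp2 : 2 < p) {t : ℝ} (ht : t ∈ Icc (0:ℝ) (1/2)) : mVal' p ≤ fp p t :=
  csInf_le (bddBelow_fp hp2) (Set.mem_image_of_mem _ ht)

lemma fp_zero (hp2 : 2 < p) : fp p 0 = 1 := by
  simp [fp, Real.zero_rpow (by linarith : p - 1 ≠ 0), Real.zero_rpow (by linarith : p ≠ 0)]

lemma mVal'_le_one (hp2 : 2 < p) : mVal' p ≤ 1 := by
  have := mVal'_le hp2 (t := 0) (by constructor <;> norm_num)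
  rwa [fp_zero hp2] at this

lemma mVal'_pos (hp2 : 2 < p) : 0 < mVal' p := by
  have hc : IsCompact (fp p '' Icc 0 (1/2)) :=
    (isCompact_Icc).image (continuous_fp hp2)
  have hne : (fp p '' Icc 0 (1/2)).Nonempty :=
    ⟨fp p 0, Set.mem_image_of_mem _ (by constructor <;> norm_num)⟩
  obtain ⟨t, ht, hteq⟩ := hc.sInf_mem hne
  rw [mVal', ← hteq]
  exact fp_pos hp2 ht


lemma mul_rpow_sub_two (hp2 : 2 < p) {a : ℝ} (ha : 0 ≤ a) : a * a ^ (p - 2) = a ^ (p - 1) := by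
  rcases eq_or_lt_of_le ha with rfl | ha'
  · rw [Real.zero_rpow (by linarith : p - 2 ≠ 0), Real.zero_rpow (by linarith : p - 1 ≠ 0), mul_zero]
  · rw [← Real.rpow_one_add' (le_of_lt ha') (by linarith : (1:ℝ) + (p-2) ≠ 0)]
    congr 1; ring

lemma tangent_ineq (hq : 1 ≤ p) {a : ℝ} (ha : 0 < a) :
    a ^ p + p * a ^ (p - 1) ≤ (1 + a) ^ p := by
  have hb' : (0:ℝ) ≤ 1/a := by positivity
  have hb : (-1:ℝ) ≤ 1/a := by linarith
  have h1 : 1 + p * (1/a) ≤ (1 + 1/a) ^ p := one_add_mul_self_le_rpow_one_add hb hq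
  have h2 : (1 + a) ^ p = a ^ p * (1 + 1/a) ^ p := by
    rw [← Real.mul_rpow ha.le (by positivity)]
    congr 1; field_simp; ring
  have hap : a ^ p = a * a ^ (p - 1) := by
    rw [← Real.rpow_one_add' ha.le (by linarith : (1:ℝ) + (p-1) ≠ 0)]
    congr 1; ring
  have h3 : a ^ p * (1 + p * (1/a)) = a ^ p + p * a ^ (p - 1) := by
    rw [mul_add, mul_one, hap]
    field_simp
  calc a ^ p + p * a ^ (p - 1) = a ^ p * (1 + p * (1/a)) := h3.symm
    _ ≤ a ^ p * (1 + 1/a) ^ p := by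
        apply mul_le_mul_of_nonneg_left h1 (Real.rpow_nonneg ha.le p)
    _ = (1 + a) ^ p := h2.symm

lemma tangent_ineq' (hq : 1 ≤ p) {t : ℝ} (ht : 1 ≤ t) :
    t ^ p - p * t ^ (p - 1) ≤ (t - 1) ^ p := by
  rcases eq_or_lt_of_le ht with rfl | ht'
  · simp [Real.zero_rpow (by linarith : p ≠ 0), Real.one_rpow]
    linarith
  · have h0 : (0:ℝ) < t := by linarith
    have hb : (-1:ℝ) ≤ -(1/t) := by
      rw [neg_le_neg_iff]
      rw [div_le_one h0]; exact ht
    have h1 : 1 + p * (-(1/t)) ≤ (1 + -(1/t)) ^ p := one_add_mul_self_le_rpow_one_add hb hq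
    have h2 : (t - 1) ^ p = t ^ p * (1 + -(1/t)) ^ p := by
      rw [← Real.mul_rpow h0.le (by rw [← sub_eq_add_neg, sub_nonneg, div_le_one h0]; exact ht)]
      congr 1; field_simp; ring
    have hap : t ^ p = t * t ^ (p - 1) := by
      rw [← Real.rpow_one_add' h0.le (by linarith : (1:ℝ) + (p-1) ≠ 0)]
      congr 1; ring
    have h3 : t ^ p * (1 + p * (-(1/t))) = t ^ p - p * t ^ (p - 1) := by
      rw [mul_add, mul_one, hap]
      field_simp
      ring
    calc t ^ p - p * t ^ (p - 1) = t ^ p * (1 + p * (-(1/t))) := h3.symm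
      _ ≤ t ^ p * (1 + -(1/t)) ^ p := mul_le_mul_of_nonneg_left h1 (Real.rpow_nonneg h0.le p)
      _ = (t - 1) ^ p := h2.symm


-- case 2 : a ≥ 0
lemma case_pos (hp2 : 2 < p) {a : ℝ} (ha : 0 ≤ a) :
    1 ≤ (1 + a) ^ p - a ^ p - p * a ^ (p - 1) := by
  set h : ℝ → ℝ := fun a => (1 + a) ^ p - a ^ p - p * a ^ (p - 1) with hh
  have hderiv : ∀ x : ℝ, 0 < x →
      HasDerivAt h (1 * p * (1 + x) ^ (p - 1) - p * x ^ (p - 1) - p * ((p - 1) * x ^ (p - 1 - 1))) x := by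
    intro x hx
    have d1 : HasDerivAt (fun a : ℝ => (1 + a) ^ p) (1 * p * (1 + x) ^ (p - 1)) x :=
      HasDerivAt.rpow_const ((hasDerivAt_id x).const_add 1) (Or.inr (by linarith))
    have d2 : HasDerivAt (fun a : ℝ => a ^ p) (p * x ^ (p - 1)) x :=
      Real.hasDerivAt_rpow_const (Or.inr (by linarith))
    have d3 : HasDerivAt (fun a : ℝ => a ^ (p - 1)) ((p - 1) * x ^ (p - 1 - 1)) x :=
      Real.hasDerivAt_rpow_const (Or.inr (by linarith))
    exact (d1.sub d2).sub (d3.const_mul p)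
  have hcont : Continuous h := by
    have h1 : Continuous fun a : ℝ => (1 + a) ^ p :=
      (continuous_rpow_const (by linarith)).comp (by continuity)
    have h2 : Continuous fun a : ℝ => a ^ p := continuous_rpow_const (by linarith)
    have h3 : Continuous fun a : ℝ => a ^ (p - 1) := continuous_rpow_const (by linarith)
    exact (h1.sub h2).sub (continuous_const.mul h3)
  have hmono : MonotoneOn h (Ici 0) := by
    apply monotoneOn_of_deriv_nonneg (convex_Ici 0) hcont.continuousOn
    · intro x hx
      rw [interior_Ici] at hx
      exact ((hderiv x hx).differentiableAt).differentiableWithinAt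
    · intro x hx
      rw [interior_Ici] at hx
      rw [(hderiv x hx).deriv]
      have key : x ^ (p - 1) + (p - 1) * x ^ ((p-1) - 1) ≤ (1 + x) ^ (p - 1) :=
        tangent_ineq (p := p - 1) (by linarith) hx
      have hxnn : (0:ℝ) ≤ x ^ (p - 1 - 1) := Real.rpow_nonneg hx.le _
      nlinarith [hp2]
  have h0 : h 0 = 1 := by
    simp [hh, Real.zero_rpow (by linarith : p ≠ 0), Real.zero_rpow (by linarith : p - 1 ≠ 0),
      Real.one_rpow]
  calc (1:ℝ) = h 0 := h0.symm
    _ ≤ h a := hmono (self_mem_Ici) ha ha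

-- case 3 : fp monotone on [1/2, 1]
lemma fp_mono_on (hp2 : 2 < p) : MonotoneOn (fp p) (Icc (1/2 : ℝ) 1) := by
  have hderiv : ∀ t : ℝ, t ∈ Ioo (1/2 : ℝ) 1 →
      HasDerivAt (fp p) (p * ((p - 1) * t ^ (p - 1 - 1)) + (-1) * p * (1 - t) ^ (p - 1)
        - p * t ^ (p - 1)) t := by
    intro t ht
    have d1 : HasDerivAt (fun t : ℝ => t ^ (p - 1)) ((p - 1) * t ^ (p - 1 - 1)) t :=
      Real.hasDerivAt_rpow_const (Or.inr (by linarith))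
    have d2 : HasDerivAt (fun t : ℝ => (1 - t) ^ p) ((-1) * p * (1 - t) ^ (p - 1)) t :=
      HasDerivAt.rpow_const ((hasDerivAt_id t).const_sub 1) (Or.inr (by linarith))
    have d3 : HasDerivAt (fun t : ℝ => t ^ p) (p * t ^ (p - 1)) t :=
      Real.hasDerivAt_rpow_const (Or.inr (by linarith))
    exact ((d1.const_mul p).add d2).sub d3
  apply monotoneOn_of_deriv_nonneg (convex_Icc _ _) (continuous_fp hp2).continuousOn
  · intro t ht
    rw [interior_Icc] at ht
    exact ((hderiv t ht).differentiableAt).differentiableWithinAt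
  · intro t ht
    rw [interior_Icc] at ht
    rw [(hderiv t ht).deriv]
    obtain ⟨ht1, ht2⟩ := ht
    have e1 : t ^ (p - 1) = t * t ^ (p - 2) := (mul_rpow_sub_two hp2 (by linarith)).symm
    have e2 : (1 - t) ^ (p - 1) = (1 - t) * (1 - t) ^ (p - 2) :=
      (mul_rpow_sub_two hp2 (by linarith)).symm
    have e3 : (1 - t) ^ (p - 2) ≤ t ^ (p - 2) :=
      Real.rpow_le_rpow (by linarith) (by linarith) (by linarith)
    have e4 : (0:ℝ) ≤ t ^ (p - 2) := Real.rpow_nonneg (by linarith) _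
    have e5 : p - 1 - 1 = p - 2 := by ring
    rw [e5]
    have hmul : (1 - t) * (1 - t) ^ (p - 2) ≤ (1 - t) * t ^ (p - 2) :=
      mul_le_mul_of_nonneg_left e3 (by linarith)
    have hb : (1 - t) ^ (p - 1) + t ^ (p - 1) ≤ (p - 1) * t ^ (p - 2) := by
      rw [e1, e2]
      nlinarith [e4]
    have hp0 : (0:ℝ) < p := by linarith
    nlinarith [mul_le_mul_of_nonneg_left hb hp0.le]

-- case 4 : k monotone on [1, ∞)
lemma case_neg_far (hp2 : 2 < p) {t : ℝ} (ht : 1 ≤ t) :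
    p - 1 ≤ p * t ^ (p - 1) + (t - 1) ^ p - t ^ p := by
  set k : ℝ → ℝ := fun t => p * t ^ (p - 1) + (t - 1) ^ p - t ^ p with hk
  have hderiv : ∀ x : ℝ, 1 < x →
      HasDerivAt k (p * ((p - 1) * x ^ (p - 1 - 1)) + 1 * p * (x - 1) ^ (p - 1)
        - p * x ^ (p - 1)) x := by
    intro x hx
    have d1 : HasDerivAt (fun x : ℝ => x ^ (p - 1)) ((p - 1) * x ^ (p - 1 - 1)) x :=
      Real.hasDerivAt_rpow_const (Or.inr (by linarith))
    have d2 : HasDerivAt (fun x : ℝ => (x - 1) ^ p) (1 * p * (x - 1) ^ (p - 1)) x :=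
      HasDerivAt.rpow_const ((hasDerivAt_id x).sub_const 1) (Or.inr (by linarith))
    have d3 : HasDerivAt (fun x : ℝ => x ^ p) (p * x ^ (p - 1)) x :=
      Real.hasDerivAt_rpow_const (Or.inr (by linarith))
    exact ((d1.const_mul p).add d2).sub d3
  have hcont : Continuous k := by
    have h1 : Continuous fun x : ℝ => (x - 1) ^ p :=
      (continuous_rpow_const (by linarith)).comp (by continuity)
    have h2 : Continuous fun x : ℝ => x ^ p := continuous_rpow_const (by linarith)
    have h3 : Continuous fun x : ℝ => x ^ (p - 1) := continuous_rpow_const (by linarith)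
    exact ((continuous_const.mul h3).add h1).sub h2
  have hmono : MonotoneOn k (Ici 1) := by
    apply monotoneOn_of_deriv_nonneg (convex_Ici 1) hcont.continuousOn
    · intro x hx
      rw [interior_Ici] at hx
      exact ((hderiv x hx).differentiableAt).differentiableWithinAt
    · intro x hx
      rw [interior_Ici] at hx
      have hx' : (1:ℝ) < x := hx
      rw [(hderiv x hx').deriv]
      have key : x ^ (p - 1) - (p - 1) * x ^ ((p-1) - 1) ≤ (x - 1) ^ (p - 1) :=
        tangent_ineq' (p := p - 1) (by linarith) (by linarith)
      nlinarith [hp2]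
  have h1 : k 1 = p - 1 := by
    simp [hk, Real.zero_rpow (by linarith : p ≠ 0), Real.one_rpow]
  calc p - 1 = k 1 := h1.symm
    _ ≤ k t := hmono (self_mem_Ici) ht ht


lemma key0 (hp2 : 2 < p) (a : ℝ) :
    mVal' p ≤ |a + 1| ^ p - |a| ^ p - p * a * |a| ^ (p - 2) := by
  rcases le_or_gt 0 a with ha | ha
  · -- a ≥ 0
    rw [abs_of_nonneg ha, abs_of_nonneg (by linarith : (0:ℝ) ≤ a + 1)]
    have e1 : a * a ^ (p - 2) = a ^ (p - 1) := mul_rpow_sub_two hp2 ha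
    have h1 := case_pos hp2 ha
    have h2 := mVal'_le_one hp2
    have e2 : (a + 1 : ℝ) = 1 + a := by ring
    rw [e2]
    nlinarith
  rcases le_or_gt (-(1/2) : ℝ) a with ha2 | ha2
  · -- -1/2 ≤ a < 0 : expression equals fp p (-a)
    rw [abs_of_neg ha, abs_of_nonneg (by linarith : (0:ℝ) ≤ a + 1)]
    have e1 : (-a) * (-a) ^ (p - 2) = (-a) ^ (p - 1) := mul_rpow_sub_two hp2 (by linarith)
    have h1 : mVal' p ≤ fp p (-a) := mVal'_le hp2 ⟨by linarith, by linarith⟩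
    have e2 : (a + 1 : ℝ) = 1 - (-a) := by ring
    rw [e2]
    unfold fp at h1
    nlinarith
  rcases le_or_gt (-1 : ℝ) a with ha3 | ha3
  · -- -1 ≤ a < -1/2 : expression equals fp p (-a), use monotonicity on [1/2,1]
    rw [abs_of_neg ha, abs_of_nonneg (by linarith : (0:ℝ) ≤ a + 1)]
    have e1 : (-a) * (-a) ^ (p - 2) = (-a) ^ (p - 1) := mul_rpow_sub_two hp2 (by linarith)
    have h0 : fp p (1/2) ≤ fp p (-a) :=
      fp_mono_on hp2 ⟨le_refl _, by norm_num⟩ ⟨by linarith, by linarith⟩ (by linarith)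
    have h1 : mVal' p ≤ fp p (1/2) := mVal'_le hp2 ⟨by norm_num, le_refl _⟩
    have e2 : (a + 1 : ℝ) = 1 - (-a) := by ring
    rw [e2]
    unfold fp at h0 h1
    nlinarith
  · -- a < -1
    rw [abs_of_neg ha, abs_of_neg (by linarith : a + 1 < 0)]
    have e1 : (-a) * (-a) ^ (p - 2) = (-a) ^ (p - 1) := mul_rpow_sub_two hp2 (by linarith)
    have h1 := case_neg_far hp2 (t := -a) (by linarith)
    have h2 := mVal'_le_one hp2
    have e2 : (-(a + 1) : ℝ) = (-a) - 1 := by ring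
    rw [e2]
    nlinarith

lemma key (hp2 : 2 < p) (a b : ℝ) :
    |a| ^ p + p * a * |a| ^ (p - 2) * b + mVal' p * |b| ^ p ≤ |a + b| ^ p := by
  rcases eq_or_ne b 0 with rfl | hb0
  · simp [Real.zero_rpow (by linarith : p ≠ 0)]
  have hb : 0 < |b| := abs_pos.2 hb0
  have h0 := key0 hp2 (a / b)
  have hbp : 0 < |b| ^ p := Real.rpow_pos_of_pos hb p
  have E1 : |a / b + 1| ^ p * |b| ^ p = |a + b| ^ p := by
    rw [← Real.mul_rpow (abs_nonneg _) (abs_nonneg _), ← abs_mul]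
    congr 2
    field_simp
  have E2 : |a / b| ^ p * |b| ^ p = |a| ^ p := by
    rw [← Real.mul_rpow (abs_nonneg _) (abs_nonneg _), ← abs_mul]
    congr 2
    field_simp
  have E3 : (p * (a / b) * |a / b| ^ (p - 2)) * |b| ^ p = p * a * |a| ^ (p - 2) * b := by
    have h1 : |a / b| ^ (p - 2) = |a| ^ (p - 2) / |b| ^ (p - 2) := by
      rw [abs_div, Real.div_rpow (abs_nonneg _) (abs_nonneg _)]
    have h2 : |b| ^ p = b ^ 2 * |b| ^ (p - 2) := by
      rw [← sq_abs, ← Real.rpow_natCast |b| 2, ← Real.rpow_add hb]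
      congr 1
      push_cast
      ring
    have h3 : (0:ℝ) < |b| ^ (p - 2) := Real.rpow_pos_of_pos hb _
    rw [h1, h2]
    field_simp
  have := mul_le_mul_of_nonneg_right h0 hbp.le
  rw [sub_mul, sub_mul, E1, E2, E3] at this
  linarith


lemma hasDerivAt_abs_rpow (hp2 : 2 < p) (t : ℝ) :
    HasDerivAt (fun u : ℝ => |u| ^ p) (p * t * |t| ^ (p - 2)) t := by
  have habs : ∀ (q : ℝ) (u : ℝ), |u| ^ q = (u ^ 2) ^ (q / 2) := by
    intro q u
    rw [← sq_abs, ← Real.rpow_natCast |u| 2, ← Real.rpow_mul (abs_nonneg u)]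
    congr 1; ring
  have h1 : HasDerivAt (fun u : ℝ => (u : ℝ) ^ 2) (2 * t) t := by
    simpa using hasDerivAt_pow 2 t
  have h2 : HasDerivAt (fun u : ℝ => (u ^ 2) ^ (p / 2))
      ((2 * t) * (p / 2) * (t ^ 2) ^ (p / 2 - 1)) t :=
    h1.rpow_const (Or.inr (by linarith))
  have heq : (fun u : ℝ => (u ^ 2) ^ (p / 2)) = fun u : ℝ => |u| ^ p := by
    funext u; rw [habs p u]
  rw [heq] at h2
  convert h2 using 1
  rw [show p / 2 - 1 = (p - 2) / 2 by ring, ← habs (p - 2) t]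
  ring

lemma smooth_interval_bound (hp2 : 2 < p) {g : ℝ → ℝ} (hg : Continuous g)
    (hsupp : HasCompactSupport g) {ε R : ℝ} (hε : 0 < ε) (hεR : ε ≤ R) :
    mVal' p * ∫ s in ε..R, |(1 / s) * (∫ θ in (0:ℝ)..s, g θ) - g s| ^ p
      ≤ (∫ s in Ioi (0:ℝ), |g s| ^ p) + ε * |(1 / ε) * ∫ θ in (0:ℝ)..ε, g θ| ^ p := by
  set G : ℝ → ℝ := fun s => ∫ θ in (0:ℝ)..s, g θ with hGdef
  set y : ℝ → ℝ := fun s => 1 / s * G s with hydef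
  set F' : ℝ → ℝ := fun s => |y s| ^ p + p * y s * |y s| ^ (p - 2) * (g s - y s) with hF'def
  have hGc : Continuous G :=
    intervalIntegral.continuous_primitive (fun a b => hg.intervalIntegrable a b) 0
  have hyd : ∀ s : ℝ, 0 < s → HasDerivAt y ((g s - y s) / s) s := by
    intro s hs
    have h1 : HasDerivAt G (g s) s :=
      intervalIntegral.integral_hasDerivAt_right (hg.intervalIntegrable 0 s)
        (hg.stronglyMeasurableAtFilter volume _) hg.continuousAt
    have h2 : HasDerivAt (fun u : ℝ => G u / u) ((g s * s - G s * 1) / (s ^ 2)) s :=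
      h1.div (hasDerivAt_id s) (ne_of_gt hs)
    have h3 : (fun u : ℝ => G u / u) = y := by funext u; rw [hydef]; ring
    rw [h3] at h2
    convert h2 using 1
    rw [hydef]
    rw [div_eq_div_iff (ne_of_gt hs) (by positivity : (s:ℝ) ^ 2 ≠ 0)]
    field_simp
  have hFd : ∀ s : ℝ, 0 < s → HasDerivAt (fun u : ℝ => u * |y u| ^ p) (F' s) s := by
    intro s hs
    have h1 : HasDerivAt (fun u : ℝ => |y u| ^ p)
        (p * y s * |y s| ^ (p - 2) * ((g s - y s) / s)) s :=
      (hasDerivAt_abs_rpow hp2 (y s)).comp s (hyd s hs)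
    have h2 := (hasDerivAt_id' s).mul h1
    refine h2.congr_deriv (Eq.symm ?_)
    rw [hF'def]
    field_simp
  have hIcc : uIcc ε R = Icc ε R := uIcc_of_le hεR
  have hmem : ∀ s ∈ Icc ε R, 0 < s := fun s hs => lt_of_lt_of_le hε hs.1
  have hyc : ContinuousOn y (Icc ε R) :=
    (continuousOn_const.div continuousOn_id fun s hs => ne_of_gt (hmem s hs)).mul
      hGc.continuousOn
  have habsP : Continuous fun v : ℝ => |v| ^ p :=
    (continuous_rpow_const (by linarith)).comp continuous_abs
  have habsP2 : Continuous fun v : ℝ => |v| ^ (p - 2) :=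
    (continuous_rpow_const (by linarith)).comp continuous_abs
  have hF'c : ContinuousOn F' (Icc ε R) := by
    apply ContinuousOn.add
    · exact habsP.comp_continuousOn hyc
    · exact ((continuousOn_const.mul hyc).mul (habsP2.comp_continuousOn hyc)).mul
        (hg.continuousOn.sub hyc)
  have hdiffc : ContinuousOn (fun s => |g s - y s| ^ p) (Icc ε R) :=
    habsP.comp_continuousOn (hg.continuousOn.sub hyc)
  have hgc : Continuous fun s => |g s| ^ p := habsP.comp hg
  have hFTC : ∫ s in ε..R, F' s = R * |y R| ^ p - ε * |y ε| ^ p := by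
    apply intervalIntegral.integral_eq_sub_of_hasDerivAt
    · intro t ht; rw [hIcc] at ht; exact hFd t (hmem t ht)
    · exact (hF'c.mono (by rw [hIcc])).intervalIntegrable
  have hpt : ∀ s ∈ Icc ε R, mVal' p * |g s - y s| ^ p ≤ |g s| ^ p - F' s := by
    intro s hs
    have hk := key hp2 (y s) (g s - y s)
    have h4 : y s + (g s - y s) = g s := by ring
    rw [h4] at hk
    simp only [hF'def]
    linarith
  have hint1 : IntervalIntegrable (fun s => mVal' p * |g s - y s| ^ p) volume ε R :=
    ((hdiffc.const_smul (mVal' p)).mono (by rw [hIcc])).intervalIntegrable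
  have hintg : IntervalIntegrable (fun s => |g s| ^ p) volume ε R := hgc.intervalIntegrable ε R
  have hintF' : IntervalIntegrable F' volume ε R := (hF'c.mono (by rw [hIcc])).intervalIntegrable
  have hmono := intervalIntegral.integral_mono_on hεR hint1 (hintg.sub hintF')
    (fun s hs => hpt s hs)
  rw [intervalIntegral.integral_sub hintg hintF', hFTC] at hmono
  have hconst : ∫ s in ε..R, mVal' p * |g s - y s| ^ p
      = mVal' p * ∫ s in ε..R, |g s - y s| ^ p := intervalIntegral.integral_const_mul _ _
  rw [hconst] at hmono
  have hFR : 0 ≤ R * |y R| ^ p :=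
    mul_nonneg (by linarith) (Real.rpow_nonneg (abs_nonneg _) _)
  have hgint_Ioi : IntegrableOn (fun s => |g s| ^ p) (Ioi 0) volume := by
    apply Integrable.integrableOn
    apply hgc.integrable_of_hasCompactSupport
    exact hsupp.comp_left (g := fun v : ℝ => |v| ^ p)
      (by simp [Real.zero_rpow (by linarith : p ≠ 0)])
  have hgbound : ∫ s in ε..R, |g s| ^ p ≤ ∫ s in Ioi (0:ℝ), |g s| ^ p := by
    rw [intervalIntegral.integral_of_le hεR]
    apply setIntegral_mono_set hgint_Ioi
    · exact ae_of_all _ fun s => Real.rpow_nonneg (abs_nonneg _) _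
    · exact HasSubset.Subset.eventuallyLE fun s hs => lt_trans hε hs.1
  have hsame : ∫ s in ε..R, |1 / s * (∫ θ in (0:ℝ)..s, g θ) - g s| ^ p
      = ∫ s in ε..R, |g s - y s| ^ p := by
    apply intervalIntegral.integral_congr
    intro s _
    simp only [hydef, hGdef]
    rw [abs_sub_comm]
  rw [hsame]
  calc mVal' p * ∫ s in ε..R, |g s - y s| ^ p
      ≤ (∫ s in ε..R, |g s| ^ p) - (R * |y R| ^ p - ε * |y ε| ^ p) := hmono
    _ ≤ (∫ s in Ioi (0:ℝ), |g s| ^ p) + ε * |y ε| ^ p := by linarith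


lemma iSup_indicator_mono {A : ℕ → Set ℝ} (hA : Monotone A) (H : ℝ → ENNReal) (x : ℝ) :
    ⨆ n, (A n).indicator H x = (⋃ n, A n).indicator H x := by
  by_cases hx : x ∈ ⋃ n, A n
  · obtain ⟨n, hn⟩ := mem_iUnion.1 hx
    rw [indicator_of_mem hx]
    refine le_antisymm (iSup_le fun m => ?_) (le_iSup_of_le n (by rw [indicator_of_mem hn]))
    exact indicator_le_self _ _ x
  · rw [indicator_of_notMem hx]
    simp only [ENNReal.iSup_eq_zero]
    intro n
    exact indicator_of_notMem (fun h => hx (mem_iUnion.2 ⟨n, h⟩)) _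

lemma A_mono : Monotone fun n : ℕ => Ioc (1 / ((n : ℝ) + 1)) ((n : ℝ) + 1) := by
  intro n m hnm
  have hc : (n : ℝ) ≤ (m : ℝ) := Nat.cast_le.2 hnm
  apply Ioc_subset_Ioc
  · apply one_div_le_one_div_of_le (by positivity)
    linarith
  · linarith

lemma A_union : (⋃ n : ℕ, Ioc (1 / ((n : ℝ) + 1)) ((n : ℝ) + 1)) = Ioi (0:ℝ) := by
  ext s
  simp only [mem_iUnion, mem_Ioc, mem_Ioi]
  constructor
  · rintro ⟨n, h1, _⟩
    exact lt_trans (by positivity) h1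
  · intro hs
    obtain ⟨n, hn⟩ := exists_nat_ge (max (1 / s) s)
    refine ⟨n, ?_, ?_⟩
    · rw [div_lt_iff₀ (by positivity)]
      have h1 : 1 / s ≤ n := le_trans (le_max_left _ _) hn
      rw [div_le_iff₀ hs] at h1
      nlinarith
    · have := le_trans (le_max_right _ _) hn
      linarith

lemma smooth_lintegral (hp2 : 2 < p) {g : ℝ → ℝ} (hg : Continuous g)
    (hsupp : HasCompactSupport g) :
    ∫⁻ s in Ioi (0:ℝ), ENNReal.ofReal (|1 / s * (∫ θ in (0:ℝ)..s, g θ) - g s| ^ p)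
      ≤ ENNReal.ofReal ((mVal' p)⁻¹ * ∫ s in Ioi (0:ℝ), |g s| ^ p) := by
  have hm := mVal'_pos hp2
  obtain ⟨C, hC⟩ := hsupp.exists_bound_of_continuous hg
  have hC0 : 0 ≤ C := le_trans (norm_nonneg _) (hC 0)
  have hApos : ∀ n : ℕ, (0:ℝ) < 1 / ((n : ℝ) + 1) := by
    intro n; positivity
  have hAle : ∀ n : ℕ, (1 : ℝ) / ((n : ℝ) + 1) ≤ (n : ℝ) + 1 := by
    intro n
    rw [div_le_iff₀ (by positivity)]
    nlinarith [Nat.cast_nonneg (α := ℝ) n]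
  have hGc : Continuous fun s : ℝ => ∫ θ in (0:ℝ)..s, g θ :=
    intervalIntegral.continuous_primitive (fun a b => hg.intervalIntegrable a b) 0
  have habsP : Continuous fun v : ℝ => |v| ^ p :=
    (continuous_rpow_const (by linarith)).comp continuous_abs
  have hhc : ContinuousOn (fun s : ℝ => |1 / s * (∫ θ in (0:ℝ)..s, g θ) - g s| ^ p) (Ioi 0) := by
    apply habsP.comp_continuousOn
    apply ContinuousOn.sub _ hg.continuousOn
    exact (continuousOn_const.div continuousOn_id fun s hs => ne_of_gt hs).mul hGc.continuousOn
  have hgnn : (0:ℝ) ≤ ∫ s in Ioi (0:ℝ), |g s| ^ p :=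
    setIntegral_nonneg measurableSet_Ioi fun s _ => Real.rpow_nonneg (abs_nonneg _) _
  have hFbound : ∀ ε : ℝ, 0 < ε → ε * |1 / ε * ∫ θ in (0:ℝ)..ε, g θ| ^ p ≤ ε * C ^ p := by
    intro ε hε
    have h1 : ‖∫ θ in (0:ℝ)..ε, g θ‖ ≤ C * |ε - 0| :=
      intervalIntegral.norm_integral_le_of_norm_le_const fun x _ => hC x
    rw [sub_zero, abs_of_pos hε] at h1
    have h2 : |1 / ε * ∫ θ in (0:ℝ)..ε, g θ| ≤ C := by
      rw [abs_mul, abs_of_pos (by positivity : (0:ℝ) < 1 / ε)]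
      rw [Real.norm_eq_abs] at h1
      calc 1 / ε * |∫ θ in (0:ℝ)..ε, g θ| ≤ 1 / ε * (C * ε) := by
            apply mul_le_mul_of_nonneg_left h1 (by positivity)
        _ = C := by field_simp
    have h3 : |1 / ε * ∫ θ in (0:ℝ)..ε, g θ| ^ p ≤ C ^ p :=
      Real.rpow_le_rpow (abs_nonneg _) h2 (by linarith)
    exact mul_le_mul_of_nonneg_left h3 hε.le
  have hbound : ∀ n : ℕ, ∫⁻ s in Ioc (1 / ((n : ℝ) + 1)) ((n : ℝ) + 1),
      ENNReal.ofReal (|1 / s * (∫ θ in (0:ℝ)..s, g θ) - g s| ^ p)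
      ≤ ENNReal.ofReal ((mVal' p)⁻¹ *
          ((∫ s in Ioi (0:ℝ), |g s| ^ p) + (1 / ((n : ℝ) + 1)) * C ^ p)) := by
    intro n
    have hIccsub : Icc (1 / ((n : ℝ) + 1)) ((n : ℝ) + 1) ⊆ Ioi (0:ℝ) :=
      fun s hs => lt_of_lt_of_le (hApos n) hs.1
    have hint : IntegrableOn (fun s : ℝ => |1 / s * (∫ θ in (0:ℝ)..s, g θ) - g s| ^ p)
        (Ioc (1 / ((n : ℝ) + 1)) ((n : ℝ) + 1)) volume :=
      ((hhc.mono hIccsub).integrableOn_compact isCompact_Icc).mono_set Ioc_subset_Icc_self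
    rw [← ofReal_integral_eq_lintegral_ofReal hint
      (ae_of_all _ fun s => Real.rpow_nonneg (abs_nonneg _) _)]
    apply ENNReal.ofReal_le_ofReal
    rw [← intervalIntegral.integral_of_le (hAle n)]
    have hIB := smooth_interval_bound hp2 hg hsupp (hApos n) (hAle n)
    have hFB := hFbound _ (hApos n)
    have hI2 : mVal' p * ∫ s in (1 / ((n:ℝ)+1))..((n:ℝ)+1), |1 / s * (∫ θ in (0:ℝ)..s, g θ) - g s| ^ p
        ≤ (∫ s in Ioi (0:ℝ), |g s| ^ p) + (1 / ((n : ℝ) + 1)) * C ^ p := le_trans hIB (by linarith)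
    rw [inv_mul_eq_div, le_div_iff₀ hm]
    nlinarith [hI2]
  -- pass to the union
  have hmeasn : ∀ n : ℕ, AEMeasurable
      ((Ioc (1 / ((n : ℝ) + 1)) ((n : ℝ) + 1)).indicator
        fun t => ENNReal.ofReal (|1 / t * (∫ θ in (0:ℝ)..t, g θ) - g t| ^ p)) volume := by
    intro n
    rw [aemeasurable_indicator_iff measurableSet_Ioc]
    have hsub : Ioc (1 / ((n : ℝ) + 1)) ((n : ℝ) + 1) ⊆ Ioi (0:ℝ) :=
      fun s hs => lt_trans (hApos n) hs.1
    exact ENNReal.measurable_ofReal.comp_aemeasurable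
      ((hhc.mono hsub).aemeasurable measurableSet_Ioc)
  have hmono' : ∀ᵐ x ∂(volume : Measure ℝ), Monotone fun n : ℕ =>
      (Ioc (1 / ((n : ℝ) + 1)) ((n : ℝ) + 1)).indicator
        (fun t => ENNReal.ofReal (|1 / t * (∫ θ in (0:ℝ)..t, g θ) - g t| ^ p)) x := by
    apply ae_of_all
    intro x n m hnm
    exact indicator_le_indicator_of_subset (A_mono hnm) (fun _ => zero_le) x
  have hsup := lintegral_iSup' hmeasn hmono'
  have hptwise : ∀ x : ℝ, (⨆ n : ℕ, (Ioc (1 / ((n : ℝ) + 1)) ((n : ℝ) + 1)).indicator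
      (fun t => ENNReal.ofReal (|1 / t * (∫ θ in (0:ℝ)..t, g θ) - g t| ^ p)) x)
      = (Ioi (0:ℝ)).indicator
        (fun t => ENNReal.ofReal (|1 / t * (∫ θ in (0:ℝ)..t, g θ) - g t| ^ p)) x := by
    intro x
    rw [iSup_indicator_mono A_mono, A_union]
  calc ∫⁻ s in Ioi (0:ℝ), ENNReal.ofReal (|1 / s * (∫ θ in (0:ℝ)..s, g θ) - g s| ^ p)
      = ∫⁻ s, (Ioi (0:ℝ)).indicator
          (fun t => ENNReal.ofReal (|1 / t * (∫ θ in (0:ℝ)..t, g θ) - g t| ^ p)) s := by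
        rw [lintegral_indicator measurableSet_Ioi]
    _ = ⨆ n : ℕ, ∫⁻ s, (Ioc (1 / ((n : ℝ) + 1)) ((n : ℝ) + 1)).indicator
          (fun t => ENNReal.ofReal (|1 / t * (∫ θ in (0:ℝ)..t, g θ) - g t| ^ p)) s := by
        rw [← hsup]
        exact lintegral_congr fun x => (hptwise x).symm
    _ ≤ ENNReal.ofReal ((mVal' p)⁻¹ * ∫ s in Ioi (0:ℝ), |g s| ^ p) := by
        apply iSup_le
        intro n
        rw [lintegral_indicator measurableSet_Ioc]
        have htendB : Filter.Tendsto (fun m : ℕ => ENNReal.ofReal ((mVal' p)⁻¹ *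
            ((∫ s in Ioi (0:ℝ), |g s| ^ p) + (1 / ((m : ℝ) + 1)) * C ^ p))) Filter.atTop
            (nhds (ENNReal.ofReal ((mVal' p)⁻¹ * ∫ s in Ioi (0:ℝ), |g s| ^ p))) := by
          apply (ENNReal.continuous_ofReal.tendsto _).comp
          have h0 : Filter.Tendsto (fun m : ℕ => 1 / ((m : ℝ) + 1)) Filter.atTop (nhds 0) :=
            tendsto_one_div_add_atTop_nhds_zero_nat
          have := ((h0.mul_const (C ^ p)).const_add (∫ s in Ioi (0:ℝ), |g s| ^ p)).const_mul
            ((mVal' p)⁻¹)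
          simpa using this
        apply ge_of_tendsto htendB
        rw [Filter.eventually_atTop]
        refine ⟨n, fun m hm => ?_⟩
        exact le_trans (lintegral_mono_set (A_mono hm)) (hbound m)


open Filter in
lemma main (hp2 : 2 < p) (x : ℝ → ℝ)
    (hx : MemLp x (ENNReal.ofReal p) (volume.restrict (Set.Ioi 0)))
    (y : ℝ → ℝ) (hy : ∀ s : ℝ, 0 < s → y s = (1 / s) * ∫ θ in (0 : ℝ)..s, x θ) :
    IntegrableOn (fun s => |y s - x s| ^ p) (Set.Ioi 0) ∧
    ∫ s in Set.Ioi (0 : ℝ), |y s - x s| ^ p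
      ≤ (mVal' p)⁻¹ * ∫ s in Set.Ioi (0 : ℝ), |x s| ^ p := by
  have hm := mVal'_pos hp2
  set μ : Measure ℝ := volume.restrict (Ioi 0) with hμ
  set q : ℝ≥0∞ := ENNReal.ofReal p with hqdef
  have hq0 : q ≠ 0 := (ENNReal.ofReal_pos.2 (by linarith)).ne'
  have hqtop : q ≠ ⊤ := ENNReal.ofReal_ne_top
  have hq1 : (1:ℝ≥0∞) ≤ q := by rw [hqdef]; exact ENNReal.one_le_ofReal.2 (by linarith)
  have hqto : q.toReal = p := by rw [hqdef]; exact ENNReal.toReal_ofReal (by linarith)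
  have hppos : (0:ℝ) < p := by linarith
  have hrle : ∀ b : ℝ, volume.restrict (Ioc (0:ℝ) b) ≤ μ := by
    intro b
    rw [hμ]
    exact Measure.restrict_mono Ioc_subset_Ioi_self le_rfl
  have hxloc : ∀ b : ℝ, IntegrableOn x (Ioc 0 b) volume := by
    intro b
    have h1 : MemLp x q (volume.restrict (Ioc 0 b)) := hx.mono_measure (hrle b)
    haveI : IsFiniteMeasure (volume.restrict (Ioc (0:ℝ) b)) :=
      ⟨by rw [Measure.restrict_apply_univ]; exact measure_Ioc_lt_top⟩
    exact h1.integrable hq1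
  have hxIcc : ∀ b : ℝ, IntegrableOn x (Icc 0 b) volume := by
    intro b
    rcases le_or_gt 0 b with hb | hb
    · have h0 : IntegrableOn x {0} volume :=
        (integrableOn_singleton_iff enorm_ne_top).2 (Or.inr (by rw [Real.volume_singleton]; exact ENNReal.zero_lt_top))
      apply (h0.union (hxloc b)).mono_set
      intro t ht
      rcases eq_or_lt_of_le ht.1 with h | h
      · exact Or.inl (by simp [← h])
      · exact Or.inr ⟨h, ht.2⟩
    · rw [Icc_eq_empty (by linarith)]
      exact integrableOn_empty
  have hprim : ContinuousOn (fun u : ℝ => ∫ t in Ioc (0:ℝ) u, x t) (Ioi 0) := by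
    intro s hs
    have hs' : (0:ℝ) < s := hs
    have h1 := intervalIntegral.continuousOn_primitive (hxIcc (s+1))
    have h2 : ContinuousAt (fun u : ℝ => ∫ t in Ioc (0:ℝ) u, x t) s :=
      h1.continuousAt (Icc_mem_nhds (by linarith) (by linarith))
    exact h2.continuousWithinAt
  have hytc : ContinuousOn (fun s : ℝ => 1 / s * ∫ t in Ioc (0:ℝ) s, x t) (Ioi 0) :=
    (continuousOn_const.div continuousOn_id fun s hs => ne_of_gt hs).mul hprim
  have hyeq : ∀ s ∈ Ioi (0:ℝ), y s = 1 / s * ∫ t in Ioc (0:ℝ) s, x t := by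
    intro s hs
    rw [hy s hs, intervalIntegral.integral_of_le (le_of_lt hs)]
  have hymeas : AEStronglyMeasurable y μ := by
    apply (hytc.aestronglyMeasurable measurableSet_Ioi).congr
    filter_upwards [ae_restrict_mem measurableSet_Ioi] with s hs
    exact (hyeq s hs).symm
  have habsP : Continuous fun v : ℝ => |v| ^ p :=
    (continuous_rpow_const (by linarith)).comp continuous_abs
  have hfmeas : AEStronglyMeasurable (fun s => |y s - x s| ^ p) μ :=
    habsP.comp_aestronglyMeasurable (hymeas.sub hx.aestronglyMeasurable)
  -- approximation sequence
  have hexists : ∀ k : ℕ, ∃ g : ℝ → ℝ, HasCompactSupport g ∧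
      eLpNorm (x - g) q μ ≤ ((k : ℝ≥0∞) + 1)⁻¹ ∧ Continuous g ∧ MemLp g q μ := by
    intro k
    apply hx.exists_hasCompactSupport_eLpNorm_sub_le hqtop
    exact ENNReal.inv_ne_zero.2 (ENNReal.add_ne_top.2 ⟨ENNReal.natCast_ne_top k, ENNReal.one_ne_top⟩)
  choose g hgsupp hgnorm hgcont hgmem using hexists
  have he0 : Tendsto (fun k : ℕ => ((k : ℝ≥0∞) + 1)⁻¹) atTop (𝓝 0) := by
    have h1 := ENNReal.tendsto_inv_nat_nhds_zero.comp (Filter.tendsto_add_atTop_nat 1)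
    have h2 : (fun k : ℕ => ((k : ℝ≥0∞) + 1)⁻¹)
        = (fun n : ℕ => ((n : ℝ≥0∞))⁻¹) ∘ (fun k : ℕ => k + 1) := by
      funext k
      simp [Function.comp]
    rw [h2]
    exact h1
  have htendnorm : Tendsto (fun k => eLpNorm (x - g k) q μ) atTop (𝓝 0) :=
    tendsto_of_tendsto_of_tendsto_of_le_of_le tendsto_const_nhds he0 (fun k => zero_le) hgnorm
  have hsymm : ∀ k, eLpNorm (g k - x) q μ = eLpNorm (x - g k) q μ := by
    intro k
    rw [← neg_sub, eLpNorm_neg]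
  have htim : TendstoInMeasure μ g atTop x := by
    apply tendstoInMeasure_of_tendsto_eLpNorm hq0 (fun k => (hgmem k).aestronglyMeasurable)
      hx.aestronglyMeasurable
    simp only [hsymm]
    exact htendnorm
  obtain ⟨ns, hns_mono, hns_ae⟩ := htim.exists_seq_tendsto_ae
  have hek : ∀ k : ℕ, eLpNorm (x - g (ns k)) q μ ≤ ((k : ℝ≥0∞) + 1)⁻¹ := by
    intro k
    refine le_trans (hgnorm (ns k)) (ENNReal.inv_le_inv.2 ?_)
    exact add_le_add_left (Nat.cast_le.2 hns_mono.le_apply) 1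
  -- pointwise convergence of the averages
  have hyk : ∀ s : ℝ, 0 < s →
      Tendsto (fun k : ℕ => 1 / s * ∫ θ in (0:ℝ)..s, g (ns k) θ) atTop (𝓝 (y s)) := by
    intro s hs
    rw [hy s hs]
    apply Filter.Tendsto.const_mul
    rw [tendsto_iff_norm_sub_tendsto_zero]
    set ν : Measure ℝ := volume.restrict (Ioc 0 s) with hν
    have hνle : ν ≤ μ := hrle s
    have hνfin : ν univ ≠ ⊤ := by
      rw [hν, Measure.restrict_apply_univ]
      exact measure_Ioc_lt_top.ne
    set D : ℝ≥0∞ := (ν univ) ^ (1/(1:ℝ≥0∞).toReal - 1/q.toReal) with hD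
    have hDfin : D ≠ ⊤ := by
      apply (ENNReal.rpow_lt_top_of_nonneg _ hνfin).ne
      rw [hqto, ENNReal.toReal_one]
      have : 1 / p < 1 := by
        rw [div_lt_one hppos]
        linarith
      linarith
    have hbd : ∀ k : ℕ, ‖(∫ θ in (0:ℝ)..s, g (ns k) θ) - ∫ θ in (0:ℝ)..s, x θ‖
        ≤ (((k : ℝ≥0∞) + 1)⁻¹ * D).toReal := by
      intro k
      have hint1 : IntegrableOn (g (ns k)) (Ioc 0 s) volume := (hgcont (ns k)).integrableOn_Ioc
      have hint2 := hxloc s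
      rw [intervalIntegral.integral_of_le hs.le, intervalIntegral.integral_of_le hs.le,
        ← integral_sub hint1 hint2]
      have hmeas3 : AEStronglyMeasurable (fun t => g (ns k) t - x t) ν :=
        (hgcont (ns k)).aestronglyMeasurable.sub (hx.aestronglyMeasurable.mono_measure hνle)
      have hfinmul : ((k : ℝ≥0∞) + 1)⁻¹ * D ≠ ⊤ :=
        ENNReal.mul_ne_top (by simp) hDfin
      calc ‖∫ t in Ioc (0:ℝ) s, (g (ns k) t - x t)‖
          ≤ ∫ t in Ioc (0:ℝ) s, ‖g (ns k) t - x t‖ := norm_integral_le_integral_norm _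
        _ = (∫⁻ t, ‖g (ns k) t - x t‖ₑ ∂ν).toReal := integral_norm_eq_lintegral_enorm hmeas3
        _ ≤ (((k : ℝ≥0∞) + 1)⁻¹ * D).toReal := by
            apply ENNReal.toReal_mono hfinmul
            rw [← eLpNorm_one_eq_lintegral_enorm]
            calc eLpNorm (fun t => g (ns k) t - x t) 1 ν
                ≤ eLpNorm (fun t => g (ns k) t - x t) q ν * D :=
                  eLpNorm_le_eLpNorm_mul_rpow_measure_univ hq1 hmeas3
              _ ≤ ((k : ℝ≥0∞) + 1)⁻¹ * D := by
                  apply mul_le_mul_left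
                  calc eLpNorm (fun t => g (ns k) t - x t) q ν
                      ≤ eLpNorm (fun t => g (ns k) t - x t) q μ := eLpNorm_mono_measure _ hνle
                    _ = eLpNorm (x - g (ns k)) q μ := hsymm (ns k)
                    _ ≤ ((k : ℝ≥0∞) + 1)⁻¹ := hek k
    apply squeeze_zero (fun k => norm_nonneg _) hbd
    have hcomp : ∀ k : ℕ, ((((k : ℝ≥0∞)) + 1)⁻¹ * D).toReal = 1 / ((k : ℝ) + 1) * D.toReal := by
      intro k
      rw [ENNReal.toReal_mul, ENNReal.toReal_inv, one_div]
      norm_num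
      left
      simp [ENNReal.toReal_add]
    simp only [hcomp]
    have := tendsto_one_div_add_atTop_nhds_zero_nat.mul_const D.toReal
    simpa using this
  -- Fatou
  have hfkmeas : ∀ k : ℕ, AEMeasurable
      (fun s => ENNReal.ofReal (|1 / s * (∫ θ in (0:ℝ)..s, g (ns k) θ) - g (ns k) s| ^ p)) μ := by
    intro k
    have hGc : Continuous fun s : ℝ => ∫ θ in (0:ℝ)..s, g (ns k) θ :=
      intervalIntegral.continuous_primitive (fun a b => (hgcont (ns k)).intervalIntegrable a b) 0
    have hc : ContinuousOn
        (fun s : ℝ => |1 / s * (∫ θ in (0:ℝ)..s, g (ns k) θ) - g (ns k) s| ^ p) (Ioi 0) := by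
      apply habsP.comp_continuousOn
      exact ((continuousOn_const.div continuousOn_id fun s hs => ne_of_gt hs).mul
        hGc.continuousOn).sub (hgcont (ns k)).continuousOn
    rw [hμ]
    exact ENNReal.measurable_ofReal.comp_aemeasurable (hc.aemeasurable measurableSet_Ioi)
  have hae : ∀ᵐ s ∂μ, ENNReal.ofReal (|y s - x s| ^ p)
      ≤ Filter.liminf (fun k =>
        ENNReal.ofReal (|1 / s * (∫ θ in (0:ℝ)..s, g (ns k) θ) - g (ns k) s| ^ p)) atTop := by
    have hmem : ∀ᵐ s ∂μ, s ∈ Ioi (0:ℝ) := by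
      rw [hμ]
      exact ae_restrict_mem measurableSet_Ioi
    filter_upwards [hns_ae, hmem] with s hconv hs
    have htt : Tendsto (fun k => |1 / s * (∫ θ in (0:ℝ)..s, g (ns k) θ) - g (ns k) s| ^ p)
        atTop (𝓝 (|y s - x s| ^ p)) :=
      (habsP.tendsto _).comp ((hyk s hs).sub hconv)
    have htt2 := (ENNReal.continuous_ofReal.tendsto _).comp htt
    exact le_of_eq htt2.liminf_eq.symm
  have hnormInt : ∀ f : ℝ → ℝ, MemLp f q μ →
      ENNReal.ofReal (∫ s in Ioi (0:ℝ), |f s| ^ p) = eLpNorm f q μ ^ p := by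
    intro f hf
    have hint : Integrable (fun s => |f s| ^ p) μ := by
      have h1 := hf.integrable_norm_rpow hq0 hqtop
      simpa [hqto, Real.norm_eq_abs] using h1
    have h2 : ∫ s in Ioi (0:ℝ), |f s| ^ p = ∫ s, |f s| ^ p ∂μ := by rw [hμ]
    rw [h2, ofReal_integral_eq_lintegral_ofReal hint
      (ae_of_all _ fun s => Real.rpow_nonneg (abs_nonneg _) _)]
    rw [eLpNorm_eq_lintegral_rpow_enorm_toReal hq0 hqtop, hqto, ← ENNReal.rpow_mul, one_div,
      inv_mul_cancel₀ (by linarith : p ≠ 0), ENNReal.rpow_one]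
    apply lintegral_congr
    intro s
    rw [← Real.enorm_abs, Real.enorm_eq_ofReal (abs_nonneg _),
      ENNReal.ofReal_rpow_of_nonneg (abs_nonneg _) (by linarith : (0:ℝ) ≤ p)]
  have hnorm_le : ∀ k : ℕ, eLpNorm (g (ns k)) q μ ≤ eLpNorm x q μ + ((k : ℝ≥0∞) + 1)⁻¹ := by
    intro k
    calc eLpNorm (g (ns k)) q μ = eLpNorm (x + (g (ns k) - x)) q μ := by rw [add_sub_cancel]
      _ ≤ eLpNorm x q μ + eLpNorm (g (ns k) - x) q μ :=
          eLpNorm_add_le hx.aestronglyMeasurable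
            ((hgmem _).aestronglyMeasurable.sub hx.aestronglyMeasurable) hq1
      _ ≤ eLpNorm x q μ + ((k : ℝ≥0∞) + 1)⁻¹ := by
          apply add_le_add_right
          rw [hsymm (ns k)]
          exact hek k
  have hbound2 : ∀ k : ℕ,
      ∫⁻ s, ENNReal.ofReal (|1 / s * (∫ θ in (0:ℝ)..s, g (ns k) θ) - g (ns k) s| ^ p) ∂μ
      ≤ ENNReal.ofReal ((mVal' p)⁻¹) * (eLpNorm x q μ + ((k : ℝ≥0∞) + 1)⁻¹) ^ p := by
    intro k
    calc ∫⁻ s, ENNReal.ofReal (|1 / s * (∫ θ in (0:ℝ)..s, g (ns k) θ) - g (ns k) s| ^ p) ∂μ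
        ≤ ENNReal.ofReal ((mVal' p)⁻¹ * ∫ s in Ioi (0:ℝ), |g (ns k) s| ^ p) := by
          rw [hμ]
          exact smooth_lintegral hp2 (hgcont _) (hgsupp _)
      _ = ENNReal.ofReal ((mVal' p)⁻¹) * ENNReal.ofReal (∫ s in Ioi (0:ℝ), |g (ns k) s| ^ p) :=
          ENNReal.ofReal_mul (inv_nonneg.2 hm.le)
      _ = ENNReal.ofReal ((mVal' p)⁻¹) * eLpNorm (g (ns k)) q μ ^ p := by
          rw [hnormInt _ (hgmem _)]
      _ ≤ ENNReal.ofReal ((mVal' p)⁻¹) * (eLpNorm x q μ + ((k : ℝ≥0∞) + 1)⁻¹) ^ p :=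
          mul_le_mul_right (ENNReal.rpow_le_rpow (hnorm_le k) hppos.le) _
  have hlim : Tendsto (fun k : ℕ =>
      ENNReal.ofReal ((mVal' p)⁻¹) * (eLpNorm x q μ + ((k : ℝ≥0∞) + 1)⁻¹) ^ p) atTop
      (𝓝 (ENNReal.ofReal ((mVal' p)⁻¹) * eLpNorm x q μ ^ p)) := by
    apply ENNReal.Tendsto.const_mul _ (Or.inr ENNReal.ofReal_ne_top)
    have h1 : Tendsto (fun k : ℕ => eLpNorm x q μ + ((k : ℝ≥0∞) + 1)⁻¹) atTop
        (𝓝 (eLpNorm x q μ + 0)) := tendsto_const_nhds.add he0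
    rw [add_zero] at h1
    exact (ENNReal.continuous_rpow_const.tendsto _).comp h1
  have hL : ∫⁻ s, ENNReal.ofReal (|y s - x s| ^ p) ∂μ
      ≤ ENNReal.ofReal ((mVal' p)⁻¹) * eLpNorm x q μ ^ p := by
    calc ∫⁻ s, ENNReal.ofReal (|y s - x s| ^ p) ∂μ
        ≤ ∫⁻ s, Filter.liminf (fun k =>
            ENNReal.ofReal (|1 / s * (∫ θ in (0:ℝ)..s, g (ns k) θ) - g (ns k) s| ^ p)) atTop ∂μ :=
          lintegral_mono_ae hae
      _ ≤ Filter.liminf (fun k => ∫⁻ s,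
            ENNReal.ofReal (|1 / s * (∫ θ in (0:ℝ)..s, g (ns k) θ) - g (ns k) s| ^ p) ∂μ) atTop :=
          lintegral_liminf_le' hfkmeas
      _ ≤ Filter.liminf (fun k : ℕ =>
            ENNReal.ofReal ((mVal' p)⁻¹) * (eLpNorm x q μ + ((k : ℝ≥0∞) + 1)⁻¹) ^ p) atTop :=
          Filter.liminf_le_liminf (Filter.Eventually.of_forall hbound2)
      _ = ENNReal.ofReal ((mVal' p)⁻¹) * eLpNorm x q μ ^ p := hlim.liminf_eq
  have hJ : (0:ℝ) ≤ ∫ s in Ioi (0:ℝ), |x s| ^ p :=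
    setIntegral_nonneg measurableSet_Ioi fun s _ => Real.rpow_nonneg (abs_nonneg _) _
  have hB : ENNReal.ofReal ((mVal' p)⁻¹) * eLpNorm x q μ ^ p
      = ENNReal.ofReal ((mVal' p)⁻¹ * ∫ s in Ioi (0:ℝ), |x s| ^ p) := by
    rw [ENNReal.ofReal_mul (inv_nonneg.2 hm.le), hnormInt x hx]
  rw [hB] at hL
  have hnn : (0 : ℝ → ℝ) ≤ᵐ[μ] fun s => |y s - x s| ^ p :=
    ae_of_all _ fun s => by simpa using Real.rpow_nonneg (abs_nonneg (y s - x s)) p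
  have hfin : HasFiniteIntegral (fun s => |y s - x s| ^ p) μ := by
    rw [hasFiniteIntegral_iff_ofReal hnn]
    exact lt_of_le_of_lt hL ENNReal.ofReal_lt_top
  constructor
  · exact ⟨hfmeas, hfin⟩
  · have h1 : ∫ s in Ioi (0:ℝ), |y s - x s| ^ p
        = (∫⁻ s, ENNReal.ofReal (|y s - x s| ^ p) ∂μ).toReal := by
      rw [hμ] at hnn hfmeas ⊢
      exact integral_eq_lintegral_of_nonneg_ae hnn hfmeas
    rw [h1]
    have h2 := ENNReal.toReal_mono ENNReal.ofReal_ne_top hL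
    rwa [ENNReal.toReal_ofReal (mul_nonneg (inv_nonneg.2 hm.le) hJ)] at h2

end Stmt13


end Aux

/-- Corollary (continuous case): for `p = 2i/(2j+1) > 2` and real-valued `x ∈ L^p(0,∞)`,
setting `y s = (1/s) ∫_0^s x`, one has `∫_0^∞ |y - x|^p ≤ (1/m_p) ∫_0^∞ |x|^p`. -/
theorem stmt13 (p : ℝ) (i j : ℕ) (hi : 0 < i) (hj : 0 < j)
    (hp : p = 2 * (i : ℝ) / (2 * (j : ℝ) + 1)) (hp2 : 2 < p)
    (x : ℝ → ℝ) (hx : MemLp x (ENNReal.ofReal p) (volume.restrict (Set.Ioi 0)))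
    (y : ℝ → ℝ) (hy : ∀ s : ℝ, 0 < s → y s = (1 / s) * ∫ θ in (0 : ℝ)..s, x θ) :
    IntegrableOn (fun s => |y s - x s| ^ p) (Set.Ioi 0) ∧
    ∫ s in Set.Ioi (0 : ℝ), |y s - x s| ^ p
      ≤ (mVal p)⁻¹ * ∫ s in Set.Ioi (0 : ℝ), |x s| ^ p := by
  have heq : mVal p = Stmt13.mVal' p := rfl
  rw [heq]
  exact Stmt13.main hp2 x hx y hy
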